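/- For n ≥ 3, the group homomorphism η : B(K_n) → B(A_n), a_i ↦ c_i, is not injective. Specifically, the element a_1 a_2 a_1^{-1} a_n a_1 a_2^{-1} a_1^{-1} a_n^{-1} is nontrivial in B(K_n) but lies in the kernel of η. -/
import Mathlib


/-- The braid relations of type `A_n` on generators `σ_1, …, σ_n`
(encoded with `0`-based indices `0, …, n-1`). -/
def braidRelsA (n : ℕ) : Set (FreeGroup (Fin n)) :=
  {r | (∃ i j : Fin n, (i : ℕ) + 1 = (j : ℕ) ∧
        r = .of i * .of j * .of i * (.of j * .of i * .of j)⁻¹) ∨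
      (∃ i j : Fin n, (i : ℕ) + 1 < (j : ℕ) ∧
        r = .of i * .of j * (.of j * .of i)⁻¹)}

/-- The Artin braid group `B(A_n)` with generators `σ_1, …, σ_n`. -/
abbrev BraidA (n : ℕ) := PresentedGroup (braidRelsA n)

/-- The generator `σ_{k+1}` of `B(A_n)` (`0`-based index `k`). -/
def σA {n : ℕ} (k : ℕ) : BraidA n :=
  if h : k < n then PresentedGroup.of ⟨k, h⟩ else 1

/-- The elements `c_k` (`0`-based: `cA n k` is `c_{k+1}` of the paper):
`c_n := σ_n` and `c_k := σ_k⁻¹ * c_{k+1} * σ_k`. -/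
def cA (n : ℕ) (k : ℕ) : BraidA n :=
  if _h : k + 1 < n then (σA k)⁻¹ * cA n (k + 1) * σA k
  else if _h2 : k < n then σA k else 1
  termination_by n - k
  decreasing_by omega

/-- The relations of the braid group `B(K_n)` whose Coxeter graph is the
complete graph on `n` vertices: `a_i a_j a_i = a_j a_i a_j` for all `i ≠ j`. -/
def braidRelsK (n : ℕ) : Set (FreeGroup (Fin n)) :=
  {r | ∃ i j : Fin n, i ≠ j ∧
        r = .of i * .of j * .of i * (.of j * .of i * .of j)⁻¹}

/-- The braid group `B(K_n)` of the complete graph on `n` vertices. -/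
abbrev BraidK (n : ℕ) := PresentedGroup (braidRelsK n)

/-- The generator `a_{k+1}` of `B(K_n)` (`0`-based index `k`). -/
def aK {n : ℕ} (k : ℕ) : BraidK n :=
  if h : k < n then PresentedGroup.of ⟨k, h⟩ else 1
section Aux

lemma rel_eq_one' {α : Type*} {rels : Set (FreeGroup α)} {r : FreeGroup α} (h : r ∈ rels) :
    PresentedGroup.mk rels r = 1 :=
  (QuotientGroup.eq_one_iff r).mpr (Subgroup.subset_normalClosure h)

lemma conj_braid {G : Type*} [Group G] {a b c : G}
    (hab : a * b * a = b * a * b) (hbc : b * c * b = c * b * c)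
    (hac : a * c = c * a) :
    a * (b⁻¹ * c * b) * a = (b⁻¹ * c * b) * a * (b⁻¹ * c * b) := by
  have h1 : a⁻¹ * b * a = b * a * b⁻¹ := by
    have h : a * (a⁻¹ * b * a) * b = a * (b * a * b⁻¹) * b := by
      calc a * (a⁻¹ * b * a) * b = b * a * b := by group
        _ = a * b * a := hab.symm
        _ = a * (b * a * b⁻¹) * b := by group
    exact mul_left_cancel (mul_right_cancel h)
  have h2' : b⁻¹ * a * b = a * b * a⁻¹ := by
    have h : b * (b⁻¹ * a * b) * a = b * (a * b * a⁻¹) * a := by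
      calc b * (b⁻¹ * a * b) * a = a * b * a := by group
        _ = b * a * b := hab
        _ = b * (a * b * a⁻¹) * a := by group
    exact mul_left_cancel (mul_right_cancel h)
  have h2 : b⁻¹ * a⁻¹ * b = a * b⁻¹ * a⁻¹ := by
    calc b⁻¹ * a⁻¹ * b = (b⁻¹ * a * b)⁻¹ := by group
      _ = (a * b * a⁻¹)⁻¹ := by rw [h2']
      _ = a * b⁻¹ * a⁻¹ := by group
  have hac1 : a⁻¹ * c = c * a⁻¹ := by
    have h : a * (a⁻¹ * c) * a = a * (c * a⁻¹) * a := by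
      calc a * (a⁻¹ * c) * a = c * a := by group
        _ = a * c := hac.symm
        _ = a * (c * a⁻¹) * a := by group
    exact mul_left_cancel (mul_right_cancel h)
  have hconj : a * c * a⁻¹ = c := by rw [hac]; group
  calc a * (b⁻¹ * c * b) * a
      = (a * b⁻¹ * a⁻¹) * (a * c * a⁻¹) * (a * b * a) := by group
    _ = (a * b⁻¹ * a⁻¹) * c * (a * b * a) := by rw [hconj]
    _ = (b⁻¹ * a⁻¹ * b) * c * (a * b * a) := by rw [h2]
    _ = (b⁻¹ * a⁻¹ * b) * c * (b * a * b) := by rw [hab]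
    _ = b⁻¹ * a⁻¹ * (b * c * b) * a * b := by group
    _ = b⁻¹ * a⁻¹ * (c * b * c) * a * b := by rw [hbc]
    _ = b⁻¹ * (a⁻¹ * c) * b * (c * a) * b := by group
    _ = b⁻¹ * (c * a⁻¹) * b * (a * c) * b := by rw [hac1, hac]
    _ = b⁻¹ * c * (a⁻¹ * b * a) * c * b := by group
    _ = b⁻¹ * c * (b * a * b⁻¹) * c * b := by rw [h1]
    _ = (b⁻¹ * c * b) * a * (b⁻¹ * c * b) := by group

end Aux

section BraidALemmas
variable {n : ℕ}

lemma σA_of {k : ℕ} (h : k < n) : σA (n := n) k = PresentedGroup.of ⟨k, h⟩ := dif_pos h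

lemma braidA_adj {i j : ℕ} (hij : i + 1 = j) (hj : j < n) :
    σA (n := n) i * σA j * σA i = σA j * σA i * σA j := by
  have hi : i < n := by omega
  have hmem : (FreeGroup.of (⟨i, hi⟩ : Fin n) * .of ⟨j, hj⟩ * .of ⟨i, hi⟩ *
      (.of ⟨j, hj⟩ * .of ⟨i, hi⟩ * .of ⟨j, hj⟩)⁻¹) ∈ braidRelsA n :=
    Or.inl ⟨⟨i, hi⟩, ⟨j, hj⟩, hij, rfl⟩
  have h := rel_eq_one' hmem
  simp only [map_mul, map_inv, mul_inv_eq_one] at h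
  rw [σA_of hi, σA_of hj]
  exact h

lemma braidA_comm {i j : ℕ} (hij : i + 1 < j) (hj : j < n) :
    σA (n := n) i * σA j = σA j * σA i := by
  have hi : i < n := by omega
  have hmem : (FreeGroup.of (⟨i, hi⟩ : Fin n) * .of ⟨j, hj⟩ *
      (.of ⟨j, hj⟩ * .of ⟨i, hi⟩)⁻¹) ∈ braidRelsA n :=
    Or.inr ⟨⟨i, hi⟩, ⟨j, hj⟩, hij, rfl⟩
  have h := rel_eq_one' hmem
  simp only [map_mul, map_inv, mul_inv_eq_one] at h
  rw [σA_of hi, σA_of hj]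
  exact h

lemma cA_step {k : ℕ} (h : k + 1 < n) : cA n k = (σA k)⁻¹ * cA n (k + 1) * σA k := by
  rw [cA]; simp [h]

lemma cA_top {k : ℕ} (h : k + 1 = n) : cA n k = σA k := by
  rw [cA]; simp [show ¬ (k + 1 < n) by omega, show k < n by omega]

lemma cA_ge {k : ℕ} (h : n ≤ k) : cA n k = 1 := by
  rw [cA]; simp [show ¬ (k + 1 < n) by omega, show ¬ (k < n) by omega]

lemma σA_comm_cA : ∀ m k j : ℕ, n - j ≤ m → k + 2 ≤ j →
    σA (n := n) k * cA n j = cA n j * σA k := by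
  intro m
  induction m with
  | zero =>
    intro k j hm hkj
    rw [cA_ge (by omega)]
    group
  | succ m ih =>
    intro k j hm hkj
    by_cases h1 : j + 1 < n
    · rw [cA_step h1]
      have hs : Commute (σA (n := n) k) (σA j) := braidA_comm (by omega) (by omega)
      have hc : Commute (σA (n := n) k) (cA n (j + 1)) := ih k (j + 1) (by omega) (by omega)
      exact ((hs.inv_right.mul_right hc).mul_right hs).eq
    · by_cases h2 : j < n
      · rw [cA_top (by omega)]
        exact braidA_comm (by omega) h2
      · rw [cA_ge (by omega)]; group

lemma σA_braid_cA : ∀ m k : ℕ, n - k ≤ m → k + 2 ≤ n →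
    σA (n := n) k * cA n (k + 1) * σA k = cA n (k + 1) * σA k * cA n (k + 1) := by
  intro m
  induction m with
  | zero => intro k hm hk; omega
  | succ m ih =>
    intro k hm hk
    by_cases h1 : k + 2 < n
    · rw [cA_step (show k + 1 + 1 < n by omega)]
      exact conj_braid (braidA_adj rfl (by omega))
        (ih (k + 1) (by omega) (by omega))
        (σA_comm_cA (n - (k + 2)) k (k + 2) le_rfl le_rfl)
    · rw [cA_top (by omega)]
      exact braidA_adj rfl (by omega)

end BraidALemmas

/-- For `n ≥ 3`, the homomorphism `η : B(K_n) → B(A_n)`, `a_i ↦ c_i`, is not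
injective: the element `a_1 a_2 a_1⁻¹ a_n a_1 a_2⁻¹ a_1⁻¹ a_n⁻¹` is nontrivial
in `B(K_n)` but lies in the kernel of `η` (`0`-based: `a_1 = aK 0`,
`a_2 = aK 1`, `a_n = aK (n-1)`). -/
theorem eta_not_injective (n : ℕ) (hn : 3 ≤ n) (η : BraidK n →* BraidA n)
    (hη : ∀ i : Fin n, η (aK (i : ℕ)) = cA n (i : ℕ)) :
    (aK (n := n) 0 * aK 1 * (aK 0)⁻¹ * aK (n - 1) * aK 0 * (aK 1)⁻¹ *
        (aK 0)⁻¹ * (aK (n - 1))⁻¹ ≠ 1) ∧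
    η (aK (n := n) 0 * aK 1 * (aK 0)⁻¹ * aK (n - 1) * aK 0 * (aK 1)⁻¹ *
        (aK 0)⁻¹ * (aK (n - 1))⁻¹) = 1 ∧
    ¬ Function.Injective η := by
  have h0 : (0 : ℕ) < n := by omega
  have h1 : (1 : ℕ) < n := by omega
  have hn1 : n - 1 < n := by omega
  -- Part 1: the element is nontrivial, via a homomorphism to Perm (Fin 3)
  set f : Fin n → Equiv.Perm (Fin 3) :=
    fun i => if (i : ℕ) = 1 then Equiv.swap 1 2 else Equiv.swap 0 1 with hf
  have hbr : ∀ u v : Equiv.Perm (Fin 3),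
      (u = Equiv.swap 0 1 ∨ u = Equiv.swap 1 2) →
      (v = Equiv.swap 0 1 ∨ v = Equiv.swap 1 2) → u * v * u = v * u * v := by
    rintro u v (rfl | rfl) (rfl | rfl) <;> decide
  have hfval : ∀ i : Fin n, f i = Equiv.swap 0 1 ∨ f i = Equiv.swap 1 2 := by
    intro i
    by_cases h : (i : ℕ) = 1 <;> simp [hf, h]
  have hrels : ∀ r ∈ braidRelsK n, FreeGroup.lift f r = 1 := by
    rintro r ⟨i, j, hij, rfl⟩
    simp only [map_mul, map_inv, FreeGroup.lift_apply_of, mul_inv_eq_one]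
    exact hbr _ _ (hfval i) (hfval j)
  set φ : BraidK n →* Equiv.Perm (Fin 3) := PresentedGroup.toGroup hrels with hφ
  have hφ0 : φ (aK 0) = Equiv.swap 0 1 := by
    rw [show aK (n := n) 0 = PresentedGroup.of ⟨0, h0⟩ from dif_pos h0, hφ,
      PresentedGroup.toGroup.of]
    simp [hf]
  have hφ1 : φ (aK 1) = Equiv.swap 1 2 := by
    rw [show aK (n := n) 1 = PresentedGroup.of ⟨1, h1⟩ from dif_pos h1, hφ,
      PresentedGroup.toGroup.of]
    simp [hf]
  have hφn : φ (aK (n - 1)) = Equiv.swap 0 1 := by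
    rw [show aK (n := n) (n - 1) = PresentedGroup.of ⟨n - 1, hn1⟩ from dif_pos hn1, hφ,
      PresentedGroup.toGroup.of]
    simp only [hf, Fin.val_mk]
    rw [if_neg (by omega)]
  have hne : aK (n := n) 0 * aK 1 * (aK 0)⁻¹ * aK (n - 1) * aK 0 * (aK 1)⁻¹ *
      (aK 0)⁻¹ * (aK (n - 1))⁻¹ ≠ 1 := by
    intro h
    have := congrArg φ h
    rw [map_one] at this
    simp only [map_mul, map_inv, hφ0, hφ1, hφn] at this
    exact absurd this (by decide)
  -- Part 2: the element is in the kernel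
  have e0 : η (aK 0) = cA n 0 := hη ⟨0, h0⟩
  have e1 : η (aK 1) = cA n 1 := hη ⟨1, h1⟩
  have en : η (aK (n - 1)) = cA n (n - 1) := hη ⟨n - 1, hn1⟩
  have hcn : cA n (n - 1) = σA (n - 1) := cA_top (by omega)
  have hc0 : cA n 0 = (σA 0)⁻¹ * cA n 1 * σA 0 := cA_step (by omega)
  have hb : σA (n := n) 0 * cA n 1 * σA 0 = cA n 1 * σA 0 * cA n 1 :=
    σA_braid_cA n 0 (by omega) (by omega)
  set s : BraidA n := σA 0
  set c : BraidA n := cA n 1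
  have key : cA n 0 * cA n 1 * (cA n 0)⁻¹ = s := by
    rw [hc0]
    have hx : (s⁻¹ * c * s) * c = s * (s⁻¹ * c * s) := by
      calc (s⁻¹ * c * s) * c = s⁻¹ * (c * s * c) := by group
        _ = s⁻¹ * (s * c * s) := by rw [hb]
        _ = s * (s⁻¹ * c * s) := by group
    rw [mul_inv_eq_iff_eq_mul]
    exact hx
  have keyinv : cA n 0 * (cA n 1)⁻¹ * (cA n 0)⁻¹ = s⁻¹ := by
    have := congrArg (·⁻¹) key
    simp only [mul_inv_rev, inv_inv] at this
    rw [← this]; group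
  have hcomm : s * σA (n := n) (n - 1) = σA (n - 1) * s :=
    braidA_comm (by omega) hn1
  have hker : η (aK (n := n) 0 * aK 1 * (aK 0)⁻¹ * aK (n - 1) * aK 0 * (aK 1)⁻¹ *
      (aK 0)⁻¹ * (aK (n - 1))⁻¹) = 1 := by
    simp only [map_mul, map_inv, e0, e1, en, hcn]
    calc cA n 0 * cA n 1 * (cA n 0)⁻¹ * σA (n - 1) * cA n 0 * (cA n 1)⁻¹ *
          (cA n 0)⁻¹ * (σA (n - 1))⁻¹
        = (cA n 0 * cA n 1 * (cA n 0)⁻¹) * σA (n - 1) *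
          (cA n 0 * (cA n 1)⁻¹ * (cA n 0)⁻¹) * (σA (n - 1))⁻¹ := by group
      _ = s * σA (n - 1) * s⁻¹ * (σA (n - 1))⁻¹ := by rw [key, keyinv]
      _ = (s * σA (n - 1)) * s⁻¹ * (σA (n - 1))⁻¹ := by group
      _ = (σA (n - 1) * s) * s⁻¹ * (σA (n - 1))⁻¹ := by rw [hcomm]
      _ = 1 := by group
  refine ⟨hne, hker, fun hinj => hne (hinj ?_)⟩
  rw [hker, map_one]
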